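/- Define $a_j(d)$ for $0 \le j \le d-1$ by $\sum_{j=0}^{d-1} a_j(d) x^j y^{d-1-j} = \prod_{j=1}^{d-1}\frac{jx+(d-j)y}{d}$. Then for any ordered partition $0 = i_0 < i_1 < \cdots < i_l = d$ and any formal variable $w$, $\sum_{c_1=0}^{i_1-i_0-1}\cdots\sum_{c_l=0}^{i_l-i_{l-1}-1} a_{c_1}(i_1-i_0)\cdots a_{c_l}(i_l-i_{l-1}) \prod_{j=1}^{l}(1+(d-i_{j-1})w)^{c_j - c_{j-1} + i_{j-1} - i_{j-2}} = \prod_{j=1}^{d-1}(1+jw)$, where by convention $c_0 = 0$ and $i_{-1} = i_0 = 0$. -/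

import Mathlib

/-- The coefficient `a_j(m)` of `x^j y^{m-1-j}` in `∏_{i=1}^{m-1} (ix + (m-i)y)/m`
(read off by setting `y = 1`). -/
noncomputable def aCoeff (m j : ℕ) : ℚ :=
  (∏ i ∈ Finset.Icc 1 (m - 1),
    (Polynomial.C ((i : ℚ) / (m : ℚ)) * Polynomial.X +
      Polynomial.C (((m : ℚ) - (i : ℚ)) / (m : ℚ)))).coeff j

open Polynomial Finset

noncomputable def summand (l d : ℕ) (i : ℕ → ℕ) (c : ℕ → ℕ) : ℚ[X] :=
  (∏ j ∈ Icc 1 l, aCoeff (i j - i (j - 1)) (c j)) •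
    ∏ j ∈ Icc 1 l, (1 + C (((d - i (j - 1) : ℕ)) : ℚ) * X) ^
      (if j = 1 then c 1 else c j + (i (j - 1) - i (j - 2)) - c (j - 1))

def cOf (l : ℕ) (i : ℕ → ℕ) (t : (j : Fin l) → Fin (i (j.1 + 1) - i j.1)) : ℕ → ℕ :=
  fun s => if h : 1 ≤ s ∧ s ≤ l then (t ⟨s - 1, by omega⟩).1 else 0

lemma one_add_ne (a : ℚ) : (1 + C a * X : ℚ[X]) ≠ 0 := by
  intro h
  have h0 := congrArg (fun p : ℚ[X] => p.coeff 0) h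
  simp at h0

lemma prodIcc {M : Type*} [CommMonoid M] (n : ℕ) (f : ℕ → M) :
    ∏ j ∈ Icc 1 n, f j = ∏ j ∈ range n, f (j + 1) := by
  rw [← Finset.Ico_add_one_right_eq_Icc, Finset.prod_Ico_eq_prod_range]
  exact Finset.prod_congr (by norm_num) fun j _ => by rw [add_comm]

lemma chain (l : ℕ) (i : ℕ → ℕ) (hmono : ∀ j, j < l → i j < i (j + 1)) :
    ∀ b, b ≤ l → ∀ a, a ≤ b → i a + (b - a) ≤ i b := by
  intro b
  induction b with
  | zero => intro _ a ha; interval_cases a; simp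
  | succ n ih =>
    intro hb a ha
    rcases Nat.lt_or_ge a (n + 1) with h | h
    · have h1 := ih (by omega) a (by omega)
      have h2 := hmono n (by omega)
      omega
    · have : a = n + 1 := by omega
      subst this; simp

lemma key' (m : ℕ) (hm : 1 ≤ m) (u v : ℚ[X]) (hv : v ≠ 0) :
    ∑ c ∈ range m, aCoeff m c • (u ^ c * v ^ (m - 1 - c)) =
      ∏ i ∈ Icc 1 (m - 1), (C ((i : ℚ) / m) * u + C (((m : ℚ) - i) / m) * v) := by
  set p : ℚ[X] := ∏ i ∈ Icc 1 (m - 1),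
    (C ((i : ℚ) / (m : ℚ)) * X + C (((m : ℚ) - (i : ℚ)) / (m : ℚ))) with hp
  have hdeg : p.natDegree < m := by
    have h1 : p.natDegree ≤ ∑ i ∈ Icc 1 (m - 1), 1 := by
      refine le_trans (Polynomial.natDegree_prod_le _ _) ?_
      exact Finset.sum_le_sum fun i _ => Polynomial.natDegree_linear_le
    simp only [Finset.sum_const, Nat.card_Icc, smul_eq_mul, mul_one] at h1
    omega
  set φ := algebraMap ℚ[X] (RatFunc ℚ) with hφ
  apply RatFunc.algebraMap_injective ℚ
  have hv' : φ v ≠ 0 := fun h =>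
    hv (by simpa using RatFunc.algebraMap_injective ℚ (h.trans (map_zero φ).symm))
  rw [map_sum, map_prod]
  have hsummand : ∀ c ∈ range m, φ (aCoeff m c • (u ^ c * v ^ (m - 1 - c))) =
      (RatFunc.C (p.coeff c) * (φ u * (φ v)⁻¹) ^ c) * (φ v) ^ (m - 1) := by
    intro c hc
    simp only [mem_range] at hc
    have key2 : (φ u * (φ v)⁻¹) ^ c * (φ v) ^ (m - 1) = φ u ^ c * φ v ^ (m - 1 - c) := by
      rw [mul_pow, show m - 1 = (m - 1 - c) + c by omega, pow_add]
      rw [Nat.add_sub_cancel, inv_pow, mul_comm (φ v ^ (m - 1 - c)), ← mul_assoc,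
        mul_assoc _ _ (φ v ^ c), inv_mul_cancel₀ (pow_ne_zero _ hv'), mul_one]
    rw [Polynomial.smul_eq_C_mul, map_mul, map_mul, map_pow, map_pow, RatFunc.algebraMap_C,
      aCoeff, ← hp, mul_assoc, ← key2]
  rw [Finset.sum_congr rfl hsummand, ← Finset.sum_mul]
  have heval := Polynomial.eval₂_eq_sum_range' (S := RatFunc ℚ) (RatFunc.C) hdeg (φ u * (φ v)⁻¹)
  rw [← heval, hp, Polynomial.eval₂_finset_prod]
  have hcard : (φ v) ^ (m - 1) = ∏ _i ∈ Icc 1 (m - 1), φ v := by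
    rw [Finset.prod_const, Nat.card_Icc, Nat.add_sub_cancel]
  rw [hcard, ← Finset.prod_mul_distrib]
  refine Finset.prod_congr rfl fun j hj => ?_
  have hmQ : (m : ℚ) ≠ 0 := by positivity
  simp only [eval₂_add, eval₂_mul, eval₂_C, eval₂_X]
  rw [map_add, map_mul, map_mul, RatFunc.algebraMap_C, RatFunc.algebraMap_C]
  have expand : (RatFunc.C ((j:ℚ)/m) * (φ u * (φ v)⁻¹) + RatFunc.C (((m:ℚ)-j)/m)) * φ v =
      RatFunc.C ((j:ℚ)/m) * φ u * ((φ v)⁻¹ * φ v) + RatFunc.C (((m:ℚ)-j)/m) * φ v := by ring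
  rw [expand, inv_mul_cancel₀ hv', mul_one]

lemma summand_congr (l d : ℕ) (i : ℕ → ℕ) (c₁ c₂ : ℕ → ℕ)
    (h : ∀ s, 1 ≤ s → s ≤ l → c₁ s = c₂ s) : summand l d i c₁ = summand l d i c₂ := by
  unfold summand
  have h1 : ∀ j ∈ Icc 1 l, aCoeff (i j - i (j-1)) (c₁ j) = aCoeff (i j - i (j-1)) (c₂ j) := by
    intro j hj
    simp only [mem_Icc] at hj
    rw [h j hj.1 hj.2]
  rw [Finset.prod_congr rfl h1]
  congr 1
  refine Finset.prod_congr rfl fun j hj => ?_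
  simp only [mem_Icc] at hj
  by_cases hj1 : j = 1
  · subst hj1; rw [if_pos rfl, if_pos rfl, h 1 le_rfl hj.2]
  · rw [if_neg hj1, if_neg hj1, h j hj.1 hj.2, h (j-1) (by omega) (by omega)]

lemma summand_split (l : ℕ) (hl : 1 ≤ l) (d : ℕ) (i : ℕ → ℕ) (c : ℕ → ℕ)
    (hc1 : c 1 ≤ i 1 - i 0) :
    summand (l + 1) d i c =
      (aCoeff (i 1 - i 0) (c 1) •
        ((1 + C ((d - i 0 : ℕ) : ℚ) * X) ^ c 1 *
         (1 + C ((d - i 1 : ℕ) : ℚ) * X) ^ (i 1 - i 0 - c 1))) *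
      summand l d (fun n => i (n + 1)) (fun s => c (s + 1)) := by
  unfold summand
  simp only []
  have hcoeff : (∏ j ∈ Icc 1 (l+1), aCoeff (i j - i (j - 1)) (c j))
      = aCoeff (i 1 - i 0) (c 1) *
        ∏ j ∈ Icc 1 l, aCoeff (i (j + 1) - i (j - 1 + 1)) (c (j + 1)) := by
    rw [prodIcc (l+1), prodIcc l, Finset.prod_range_succ', mul_comm]
    congr 1
  have hpow : (∏ j ∈ Icc 1 (l+1), (1 + C (((d - i (j - 1) : ℕ)) : ℚ) * X) ^
        (if j = 1 then c 1 else c j + (i (j - 1) - i (j - 2)) - c (j - 1)))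
      = ((1 + C ((d - i 0 : ℕ) : ℚ) * X) ^ c 1 *
         (1 + C ((d - i 1 : ℕ) : ℚ) * X) ^ (i 1 - i 0 - c 1)) *
        ∏ j ∈ Icc 1 l, (1 + C (((d - i (j - 1 + 1) : ℕ)) : ℚ) * X) ^
          (if j = 1 then c (1 + 1)
           else c (j + 1) + (i (j - 1 + 1) - i (j - 2 + 1)) - c (j - 1 + 1)) := by
    rw [prodIcc (l+1), prodIcc l, Finset.prod_range_succ']
    have step : ∀ j ∈ range l,
        (1 + C (((d - i (j + 1 + 1 - 1) : ℕ)) : ℚ) * X) ^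
          (if j + 1 + 1 = 1 then c 1
           else c (j + 1 + 1) + (i (j + 1 + 1 - 1) - i (j + 1 + 1 - 2)) - c (j + 1 + 1 - 1))
        = ((1 + C (((d - i (j + 1 - 1 + 1) : ℕ)) : ℚ) * X) ^
            (if j + 1 = 1 then c (1 + 1)
             else c (j + 1 + 1) + (i (j + 1 - 1 + 1) - i (j + 1 - 2 + 1)) - c (j + 1 - 1 + 1))) *
          (if j = 0 then (1 + C ((d - i 1 : ℕ) : ℚ) * X) ^ (i 1 - i 0 - c 1) else 1) := by
      intro j hj
      rcases Nat.eq_zero_or_pos j with h0 | hpos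
      · subst h0
        rw [if_neg (by omega), if_pos rfl, if_pos rfl]
        norm_num
        rw [← pow_add]
        congr 1
        omega
      · rw [if_neg (by omega), if_neg (by omega), if_neg (by omega), mul_one,
          show j + 1 + 1 - 1 = j + 1 - 1 + 1 from by omega,
          show j + 1 + 1 - 2 = j + 1 - 2 + 1 from by omega]
    rw [Finset.prod_congr rfl step, Finset.prod_mul_distrib, Finset.prod_ite_eq',
      if_pos (Finset.mem_range.mpr (by omega : (0:ℕ) < l))]
    norm_num
    ring
  rw [hcoeff, hpow, smul_eq_C_mul, smul_eq_C_mul, smul_eq_C_mul, map_mul]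
  ring

lemma aux_base (i : ℕ → ℕ) (h01 : i 0 < i 1) :
    (∑ t : (j : Fin 1) → Fin (i (j.1 + 1) - i j.1), summand 1 (i 1) i (cOf 1 i t))
      = ∏ k ∈ Icc 1 (i 1 - i 0 - 1), (1 + C (k : ℚ) * X) := by
  have hm : 1 ≤ i 1 - i 0 := by omega
  have step1 : (∑ t : (j : Fin 1) → Fin (i (j.1 + 1) - i j.1), summand 1 (i 1) i (cOf 1 i t))
      = ∑ c ∈ range (i 1 - i 0), aCoeff (i 1 - i 0) c •
          ((1 + C ((i 1 - i 0 : ℕ) : ℚ) * X) ^ c * (1 : ℚ[X]) ^ (i 1 - i 0 - 1 - c)) := by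
    rw [← Fin.sum_univ_eq_sum_range (fun c => aCoeff (i 1 - i 0) c •
          ((1 + C ((i 1 - i 0 : ℕ) : ℚ) * X) ^ c * (1 : ℚ[X]) ^ (i 1 - i 0 - 1 - c))) (i 1 - i 0)]
    refine Fintype.sum_equiv (Equiv.piUnique fun j : Fin 1 => Fin (i (j.1 + 1) - i j.1)) _ _
      fun t => ?_
    have hc : cOf 1 i t 1 =
        ((Equiv.piUnique fun j : Fin 1 => Fin (i (j.1 + 1) - i j.1)) t).1 := by
      simp only [cOf, Equiv.piUnique_apply]
      rw [dif_pos (by omega)]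
      exact congrArg (fun x => (t x).1) (Subsingleton.elim _ _)
    unfold summand
    rw [Icc_self, Finset.prod_singleton, Finset.prod_singleton, if_pos rfl, ← hc]
    norm_num
  rw [step1, key' (i 1 - i 0) hm _ 1 one_ne_zero]
  refine Finset.prod_congr rfl fun k hk => ?_
  simp only [mem_Icc] at hk
  have hM : ((i 1 - i 0 : ℕ) : ℚ) ≠ 0 := Nat.cast_ne_zero.mpr (by omega)
  have e1 : (k : ℚ) / ((i 1 - i 0 : ℕ) : ℚ)
      + (((i 1 - i 0 : ℕ) : ℚ) - k) / ((i 1 - i 0 : ℕ) : ℚ) = 1 := by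
    field_simp
    ring
  have e2 : (k : ℚ) / ((i 1 - i 0 : ℕ) : ℚ) * ((i 1 - i 0 : ℕ) : ℚ) = (k : ℚ) :=
    div_mul_cancel₀ _ hM
  calc C ((k : ℚ) / ((i 1 - i 0 : ℕ) : ℚ)) * (1 + C ((i 1 - i 0 : ℕ) : ℚ) * X)
        + C ((((i 1 - i 0 : ℕ) : ℚ) - k) / ((i 1 - i 0 : ℕ) : ℚ)) * 1
      = C ((k : ℚ) / ((i 1 - i 0 : ℕ) : ℚ) + (((i 1 - i 0 : ℕ) : ℚ) - k) / ((i 1 - i 0 : ℕ) : ℚ))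
        + C ((k : ℚ) / ((i 1 - i 0 : ℕ) : ℚ) * ((i 1 - i 0 : ℕ) : ℚ)) * X := by
        rw [C_add, C_mul]; ring
    _ = 1 + C (k : ℚ) * X := by rw [e1, e2, C_1]

lemma block_eq (i0 i1 D : ℕ) (h01 : i0 < i1) (h1D : i1 < D) :
    (∑ c ∈ range (i1 - i0), aCoeff (i1 - i0) c •
        ((1 + C ((D - i0 : ℕ) : ℚ) * X) ^ c *
         (1 + C ((D - i1 : ℕ) : ℚ) * X) ^ (i1 - i0 - c))) *
      ∏ k ∈ Icc 1 (D - i1 - 1), (1 + C (k : ℚ) * X)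
    = ∏ k ∈ Icc 1 (D - i0 - 1), (1 + C (k : ℚ) * X) := by
  have hm : 1 ≤ i1 - i0 := by omega
  set U0 : ℚ[X] := 1 + C ((D - i0 : ℕ) : ℚ) * X with hU0
  set U1 : ℚ[X] := 1 + C ((D - i1 : ℕ) : ℚ) * X with hU1
  have hpull : (∑ c ∈ range (i1 - i0), aCoeff (i1 - i0) c • (U0 ^ c * U1 ^ (i1 - i0 - c)))
      = (∑ c ∈ range (i1 - i0), aCoeff (i1 - i0) c • (U0 ^ c * U1 ^ (i1 - i0 - 1 - c))) * U1 := by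
    rw [Finset.sum_mul]
    refine Finset.sum_congr rfl fun c hc => ?_
    simp only [mem_range] at hc
    rw [smul_mul_assoc, mul_assoc, ← pow_succ,
      show i1 - i0 - 1 - c + 1 = i1 - i0 - c from by omega]
  rw [hpull, key' (i1 - i0) hm U0 U1 (one_add_ne _)]
  have hfac : ∀ j ∈ range (i1 - i0 - 1),
      C (((j + 1 : ℕ) : ℚ) / ((i1 - i0 : ℕ) : ℚ)) * U0 +
        C ((((i1 - i0 : ℕ) : ℚ) - ((j + 1 : ℕ) : ℚ)) / ((i1 - i0 : ℕ) : ℚ)) * U1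
      = 1 + C (((D - i1 + (j + 1) : ℕ)) : ℚ) * X := by
    intro j hj
    have hM : ((i1 - i0 : ℕ) : ℚ) ≠ 0 := Nat.cast_ne_zero.mpr (by omega)
    have hA : ((D - i0 : ℕ) : ℚ) = (D : ℚ) - i0 := by
      rw [Nat.cast_sub (by omega)]
    have hB : ((D - i1 : ℕ) : ℚ) = (D : ℚ) - i1 := by
      rw [Nat.cast_sub (by omega)]
    have hMM : ((i1 - i0 : ℕ) : ℚ) = (i1 : ℚ) - i0 := by
      rw [Nat.cast_sub (by omega)]
    have hW : ((D - i1 + (j + 1) : ℕ) : ℚ) = (D : ℚ) - i1 + (j + 1) := by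
      push_cast [Nat.cast_sub (le_of_lt h1D)]
      ring
    set u : ℚ := ((j + 1 : ℕ) : ℚ) / ((i1 - i0 : ℕ) : ℚ) with hu
    set v : ℚ := (((i1 - i0 : ℕ) : ℚ) - ((j + 1 : ℕ) : ℚ)) / ((i1 - i0 : ℕ) : ℚ) with hv
    have e1 : u + v = 1 := by rw [hu, hv]; field_simp; ring
    have e2 : u * ((D : ℚ) - i0) + v * ((D : ℚ) - i1) = (D : ℚ) - i1 + (j + 1) := by
      rw [hu, hv, hMM]
      have hM' : (i1 : ℚ) - i0 ≠ 0 := by rw [← hMM]; exact hM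
      field_simp
      push_cast
      ring
    calc C u * U0 + C v * U1
        = C (u + v) + C (u * ((D : ℚ) - i0) + v * ((D : ℚ) - i1)) * X := by
          rw [hU0, hU1, hA, hB, C_add, C_add, C_mul, C_mul]; ring
      _ = 1 + C (((D - i1 + (j + 1) : ℕ)) : ℚ) * X := by rw [e1, e2, hW, C_1]
  rw [prodIcc (i1 - i0 - 1), Finset.prod_congr rfl hfac]
  have hU1f : U1 = 1 + C (((D - i1 + 0 : ℕ)) : ℚ) * X := by rw [hU1]; norm_num
  rw [hU1f, ← Finset.prod_range_succ' (fun j => 1 + C (((D - i1 + j : ℕ)) : ℚ) * X) (i1 - i0 - 1),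
    show i1 - i0 - 1 + 1 = i1 - i0 from by omega]
  have hIco1 : (∏ k ∈ Icc 1 (D - i1 - 1), (1 + C (k : ℚ) * X))
      = ∏ k ∈ Ico 1 (D - i1), (1 + C (k : ℚ) * X) := by
    rw [← Finset.Ico_add_one_right_eq_Icc, show D - i1 - 1 + 1 = D - i1 from by omega]
  have hIco2 : (∏ j ∈ range (i1 - i0), (1 + C (((D - i1 + j : ℕ)) : ℚ) * X))
      = ∏ k ∈ Ico (D - i1) (D - i0), (1 + C (k : ℚ) * X) := by
    rw [Finset.prod_Ico_eq_prod_range, show D - i0 - (D - i1) = i1 - i0 from by omega]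
  rw [hIco1, hIco2, mul_comm,
    Finset.prod_Ico_consecutive _ (by omega : 1 ≤ D - i1) (by omega : D - i1 ≤ D - i0),
    ← Finset.Ico_add_one_right_eq_Icc, show D - i0 - 1 + 1 = D - i0 from by omega]

lemma aux : ∀ l, 1 ≤ l → ∀ i : ℕ → ℕ, (∀ j, j < l → i j < i (j + 1)) →
    (∑ t : (j : Fin l) → Fin (i (j.1 + 1) - i j.1), summand l (i l) i (cOf l i t))
      = ∏ k ∈ Icc 1 (i l - i 0 - 1), (1 + C (k : ℚ) * X) := by
  intro l
  induction l with
  | zero => omega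
  | succ n IH =>
    intro _ i hmono
    rcases Nat.eq_zero_or_pos n with h0 | hn
    · subst h0; exact aux_base i (hmono 0 (by omega))
    have h01 : i 0 < i 1 := hmono 0 (by omega)
    have h1D : i 1 < i (n + 1) := by
      have := chain (n + 1) i hmono (n + 1) le_rfl 1 (by omega)
      omega
    calc (∑ t : (j : Fin (n+1)) → Fin (i (j.1 + 1) - i j.1),
            summand (n+1) (i (n+1)) i (cOf (n+1) i t))
        = ∑ c₀ : Fin (i 1 - i 0), ∑ t' : (j : Fin n) → Fin (i (j.1 + 2) - i (j.1 + 1)),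
            summand (n+1) (i (n+1)) i (cOf (n+1) i (Fin.cons c₀ t')) := by
          rw [← Equiv.sum_comp (Fin.consEquiv (fun j : Fin (n+1) => Fin (i (j.1 + 1) - i j.1)))
            (fun t => summand (n+1) (i (n+1)) i (cOf (n+1) i t)), Fintype.sum_prod_type]
          rfl
      _ = ∑ c₀ : Fin (i 1 - i 0),
            (aCoeff (i 1 - i 0) c₀.1 •
              ((1 + C ((i (n+1) - i 0 : ℕ) : ℚ) * X) ^ c₀.1 *
               (1 + C ((i (n+1) - i 1 : ℕ) : ℚ) * X) ^ (i 1 - i 0 - c₀.1))) *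
            ∑ t' : (j : Fin n) → Fin (i (j.1 + 2) - i (j.1 + 1)),
              summand n (i (n+1)) (fun m => i (m + 1)) (cOf n (fun m => i (m + 1)) t') := by
          refine Finset.sum_congr rfl fun c₀ _ => ?_
          rw [Finset.mul_sum]
          refine Finset.sum_congr rfl fun t' _ => ?_
          have hT1 : cOf (n+1) i (Fin.cons c₀ t') 1 = c₀.1 := by
            simp only [cOf]
            rw [dif_pos (by omega)]
            rfl
          have hTs : ∀ s, 1 ≤ s → s ≤ n →
              cOf (n+1) i (Fin.cons c₀ t') (s + 1) = cOf n (fun m => i (m + 1)) t' s := by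
            intro s h1 h2
            simp only [cOf]
            rw [dif_pos (by omega), dif_pos (by omega)]
            have hmk : (⟨s + 1 - 1, by omega⟩ : Fin (n+1)) = Fin.succ (⟨s - 1, by omega⟩ : Fin n) := by
              ext
              simp
              omega
            have h2' : Fin.cons (α := fun j : Fin (n+1) => Fin (i (j.1 + 1) - i j.1)) c₀ t'
                (Fin.succ (⟨s - 1, by omega⟩ : Fin n)) = t' ⟨s - 1, by omega⟩ := by
              exact Fin.cons_succ (α := fun j : Fin (n+1) => Fin (i (j.1 + 1) - i j.1)) c₀ t' _
            exact (congrArg (fun j : Fin (n+1) =>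
              (Fin.cons (α := fun j : Fin (n+1) => Fin (i (j.1 + 1) - i j.1)) c₀ t' j).1) hmk).trans
              (congrArg Fin.val h2')
          rw [summand_split n hn (i (n+1)) i (cOf (n+1) i (Fin.cons c₀ t'))
            (by rw [hT1]; omega), hT1]
          congr 1
          exact summand_congr n (i (n+1)) (fun m => i (m+1)) _ _ hTs
      _ = (∑ c₀ : Fin (i 1 - i 0),
            aCoeff (i 1 - i 0) c₀.1 •
              ((1 + C ((i (n+1) - i 0 : ℕ) : ℚ) * X) ^ c₀.1 *
               (1 + C ((i (n+1) - i 1 : ℕ) : ℚ) * X) ^ (i 1 - i 0 - c₀.1))) *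
            ∑ t' : (j : Fin n) → Fin (i (j.1 + 2) - i (j.1 + 1)),
              summand n (i (n+1)) (fun m => i (m + 1)) (cOf n (fun m => i (m + 1)) t') := by
          rw [← Finset.sum_mul]
      _ = (∑ c₀ : Fin (i 1 - i 0),
            aCoeff (i 1 - i 0) c₀.1 •
              ((1 + C ((i (n+1) - i 0 : ℕ) : ℚ) * X) ^ c₀.1 *
               (1 + C ((i (n+1) - i 1 : ℕ) : ℚ) * X) ^ (i 1 - i 0 - c₀.1))) *
            ∏ k ∈ Icc 1 (i (n+1) - i 1 - 1), (1 + C (k : ℚ) * X) := by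
          congr 1
          exact IH hn (fun m => i (m + 1)) (fun j hj => hmono (j + 1) (by omega))
      _ = ∏ k ∈ Icc 1 (i (n+1) - i 0 - 1), (1 + C (k : ℚ) * X) := by
          rw [Fin.sum_univ_eq_sum_range (fun c => aCoeff (i 1 - i 0) c •
            ((1 + C ((i (n+1) - i 0 : ℕ) : ℚ) * X) ^ c *
             (1 + C ((i (n+1) - i 1 : ℕ) : ℚ) * X) ^ (i 1 - i 0 - c))) (i 1 - i 0)]
          exact block_eq (i 0) (i 1) (i (n+1)) h01 h1D

open Polynomial in
theorem stmt_3 (d l : ℕ) (hd : 1 ≤ d) (hl : 1 ≤ l) (i : ℕ → ℕ)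
    (hi0 : i 0 = 0) (hil : i l = d) (hmono : ∀ j, j < l → i j < i (j + 1)) :
    (∑ t : (j : Fin l) → Fin (i (j.1 + 1) - i j.1),
      (let c : ℕ → ℕ := fun s => if h : 1 ≤ s ∧ s ≤ l then (t ⟨s - 1, by omega⟩).1 else 0
       (∏ j ∈ Finset.Icc 1 l, aCoeff (i j - i (j - 1)) (c j)) •
        ∏ j ∈ Finset.Icc 1 l,
          (1 + C ((d : ℚ) - (i (j - 1) : ℚ)) * X) ^
            (if j = 1 then c 1 else c j + (i (j - 1) - i (j - 2)) - c (j - 1)))) =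
      ∏ j ∈ Finset.Icc 1 (d - 1), (1 + C (j : ℚ) * X) := by
  have haux := aux l hl i hmono
  rw [hil, hi0] at haux
  simp only [Nat.sub_zero] at haux
  rw [← haux]
  refine Finset.sum_congr rfl fun t _ => ?_
  show (∏ j ∈ Finset.Icc 1 l, aCoeff (i j - i (j - 1)) (cOf l i t j)) •
      (∏ j ∈ Finset.Icc 1 l,
        (1 + C ((d : ℚ) - (i (j - 1) : ℚ)) * X) ^
          (if j = 1 then cOf l i t 1
           else cOf l i t j + (i (j - 1) - i (j - 2)) - cOf l i t (j - 1)))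
    = summand l d i (cOf l i t)
  unfold summand
  congr 1
  refine Finset.prod_congr rfl fun j hj => ?_
  simp only [mem_Icc] at hj
  have hjd : i (j - 1) ≤ d := by
    have := chain l i hmono l le_rfl (j - 1) (by omega)
    omega
  rw [Nat.cast_sub hjd]
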